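/- For any positive integer k, the anti-van der Waerden number aw(P_2 □ C_{2k+1}, 3) = 3. -/

import Mathlib

set_option maxHeartbeats 1000000

open SimpleGraph

/-- A rainbow 3-AP in `G` under coloring `c`: three vertices with
`d(v₁,v₂) = d(v₂,v₃)` receiving pairwise distinct colors. -/
def HasRainbow3AP {V C : Type*} (G : SimpleGraph V) (c : V → C) : Prop :=
  ∃ v₁ v₂ v₃ : V, G.dist v₁ v₂ = G.dist v₂ v₃ ∧
    c v₁ ≠ c v₂ ∧ c v₂ ≠ c v₃ ∧ c v₁ ≠ c v₃

/-- The anti-van der Waerden number `aw(G,3)`: the least positive `r` such that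
every surjective coloring with `r` colors yields a rainbow 3-AP. -/
noncomputable def aw {V : Type*} (G : SimpleGraph V) : ℕ :=
  sInf {r : ℕ | 0 < r ∧ ∀ c : V → Fin r, Function.Surjective c → HasRainbow3AP G c}

namespace AWaux

variable {α β : Type*} {G : SimpleGraph α} {H : SimpleGraph β}

lemma boxProd_walk_lower (hG : G.Connected) (hH : H.Connected) {x y : α × β}
    (p : (G □ H).Walk x y) : G.dist x.1 y.1 + H.dist x.2 y.2 ≤ p.length := by
  induction p with
  | nil => simp
  | @cons u v w h p ih =>
    rw [SimpleGraph.Walk.length_cons]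
    rcases boxProd_adj.mp h with ⟨h1, h2⟩ | ⟨h1, h2⟩
    · have t1 : G.dist u.1 w.1 ≤ 1 + G.dist v.1 w.1 := by
        have h3 := hG.dist_triangle (u := u.1) (v := v.1) (w := w.1)
        have h4 : G.dist u.1 v.1 = 1 := dist_eq_one_iff_adj.mpr h1
        omega
      have t2 : H.dist u.2 w.2 = H.dist v.2 w.2 := by rw [h2]
      omega
    · have t1 : H.dist u.2 w.2 ≤ 1 + H.dist v.2 w.2 := by
        have h3 := hH.dist_triangle (u := u.2) (v := v.2) (w := w.2)
        have h4 : H.dist u.2 v.2 = 1 := dist_eq_one_iff_adj.mpr h1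
        omega
      have t2 : G.dist u.1 w.1 = G.dist v.1 w.1 := by rw [h2]
      omega

lemma boxProd_dist (hG : G.Connected) (hH : H.Connected) (x y : α × β) :
    (G □ H).dist x y = G.dist x.1 y.1 + H.dist x.2 y.2 := by
  obtain ⟨x1, x2⟩ := x
  obtain ⟨y1, y2⟩ := y
  apply le_antisymm
  · obtain ⟨p, hp⟩ := hG.exists_walk_length_eq_dist x1 y1
    obtain ⟨q, hq⟩ := hH.exists_walk_length_eq_dist x2 y2
    have hle := SimpleGraph.dist_le ((p.boxProdLeft H x2).append (q.boxProdRight G y1))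
    have e1 : (p.boxProdLeft H x2).length = p.length := SimpleGraph.Walk.length_map _ _
    have e2 : (q.boxProdRight G y1).length = q.length := SimpleGraph.Walk.length_map _ _
    rwa [SimpleGraph.Walk.length_append, e1, e2, hp, hq] at hle
  · obtain ⟨p, hp⟩ := ((hG.boxProd hH).exists_walk_length_eq_dist (x1, x2) (y1, y2))
    rw [← hp]
    exact boxProd_walk_lower hG hH p

variable {k : ℕ}

/-- cyclic distance on `Fin (2*k+1)` -/
def cd (a b : Fin (2 * k + 1)) : ℕ := min (b - a).val (a - b).val

lemma sub_val (a b : Fin (2 * k + 1)) :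
    (a - b).val = (2 * k + 1 - b.val + a.val) % (2 * k + 1) := by
  rw [Fin.sub_def]

lemma modn (A : ℕ) (h : A < 2 * (2 * k + 1)) :
    A % (2 * k + 1) = if A < 2 * k + 1 then A else A - (2 * k + 1) := by
  split_ifs with h'
  · exact Nat.mod_eq_of_lt h'
  · rw [Nat.mod_eq_sub_mod (by omega), Nat.mod_eq_of_lt (by omega)]

lemma cd_eval (a b : Fin (2 * k + 1)) :
    cd a b = if a.val ≤ b.val then min (b.val - a.val) (2 * k + 1 - (b.val - a.val))
      else min (a.val - b.val) (2 * k + 1 - (a.val - b.val)) := by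
  have ha := a.isLt; have hb := b.isLt
  rw [cd, sub_val, sub_val, modn _ (by omega), modn _ (by omega)]
  split_ifs <;> omega

lemma cycle_adj_val {u v : Fin (2 * k + 1)}
    (h : (cycleGraph (2 * k + 1)).Adj u v) :
    v.val = u.val + 1 ∨ u.val = v.val + 1 ∨ (u.val = 0 ∧ v.val = 2 * k) ∨
      (v.val = 0 ∧ u.val = 2 * k) := by
  have hu := u.isLt; have hv := v.isLt
  rcases cycleGraph_adj'.mp h with h1 | h1 <;>
    rw [sub_val, modn _ (by omega)] at h1 <;> split_ifs at h1 <;> omega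

lemma cd_lipschitz (a : Fin (2 * k + 1)) {u v : Fin (2 * k + 1)}
    (h : (cycleGraph (2 * k + 1)).Adj u v) : cd a v ≤ cd a u + 1 := by
  have hu := u.isLt; have hv := v.isLt; have ha := a.isLt
  rw [cd_eval, cd_eval]
  rcases cycle_adj_val h with h1 | h1 | h1 | h1 <;> split_ifs <;> omega

lemma cycle_dist_le_sub (hk : 1 ≤ k) :
    ∀ (m : ℕ) (a b : Fin (2 * k + 1)), (b - a).val = m →
      (cycleGraph (2 * k + 1)).dist a b ≤ m := by
  intro m
  induction m with
  | zero =>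
    intro a b hab
    have h0 : b - a = 0 := Fin.ext (by simpa using hab)
    rw [sub_eq_zero.mp h0, SimpleGraph.dist_self]
  | succ m ih =>
    intro a b hab
    have hadj : (cycleGraph (2 * k + 1)).Adj a (a + 1) := by
      rw [cycleGraph_adj']
      right
      rw [add_sub_cancel_left, Fin.val_one', Nat.mod_eq_of_lt (by omega)]
    have hsub : (b - (a + 1)).val = m := by
      have he : b - (a + 1) = b - a - 1 := by abel
      rw [he, sub_val, Fin.val_one',
        Nat.mod_eq_of_lt (show (1:ℕ) < 2 * k + 1 by omega), hab,
        show 2 * k + 1 - 1 + (m + 1) = (2 * k + 1) + m by omega, Nat.add_mod_left,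
        Nat.mod_eq_of_lt (by have := (b - a).isLt; omega)]
    have htri := (cycleGraph_connected (n := 2 * k)).dist_triangle (u := a) (v := a + 1) (w := b)
    have h1 : (cycleGraph (2 * k + 1)).dist a (a + 1) = 1 := dist_eq_one_iff_adj.mpr hadj
    have h2 := ih (a + 1) b hsub
    omega

lemma walk_potential {V : Type*} {G : SimpleGraph V} (f : V → ℕ)
    (hf : ∀ u v, G.Adj u v → f v ≤ f u + 1) :
    ∀ {a b : V} (p : G.Walk a b), f b ≤ f a + p.length := by
  intro a b p
  induction p with
  | nil => simp
  | @cons u v w h p ih =>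
    have := hf u v h
    rw [SimpleGraph.Walk.length_cons]
    omega

lemma cycle_dist (hk : 1 ≤ k) (a b : Fin (2 * k + 1)) :
    (cycleGraph (2 * k + 1)).dist a b = cd a b := by
  apply le_antisymm
  · have h1 := cycle_dist_le_sub hk (b - a).val a b rfl
    have h2 := cycle_dist_le_sub hk (a - b).val b a rfl
    rw [SimpleGraph.dist_comm (u := b)] at h2
    rw [cd]
    omega
  · obtain ⟨p, hp⟩ := (cycleGraph_connected (n := 2 * k)).exists_walk_length_eq_dist a b
    have hpot := walk_potential (cd a) (fun u v h => cd_lipschitz a h) p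
    have hz : cd a a = 0 := by rw [cd_eval]; simp
    omega

lemma path2_dist (i j : Fin 2) :
    (pathGraph 2).dist i j = if i = j then 0 else 1 := by
  split_ifs with h
  · rw [h, SimpleGraph.dist_self]
  · rw [dist_eq_one_iff_adj, pathGraph_adj]
    have hi := i.isLt; have hj := j.isLt
    have : i.val ≠ j.val := fun hc => h (Fin.ext hc)
    omega

lemma dist_formula (hk : 1 ≤ k) (u v : Fin 2 × Fin (2 * k + 1)) :
    (pathGraph 2 □ cycleGraph (2 * k + 1)).dist u v =
      (if u.1 = v.1 then 0 else 1) + cd u.2 v.2 := by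
  rw [boxProd_dist (pathGraph_connected 1) (cycleGraph_connected (n := 2 * k)),
    path2_dist, cycle_dist hk]


/-! ### Part 2: arithmetic rainbow combinatorics -/

def D (u v : Fin 2 × Fin (2 * k + 1)) : ℕ :=
  (if u.1 = v.1 then 0 else 1) + cd u.2 v.2

def NoR (c : Fin 2 × Fin (2 * k + 1) → Fin 3) : Prop :=
  ∀ v1 v2 v3, D v1 v2 = D v2 v3 → c v1 = c v2 ∨ c v2 = c v3 ∨ c v1 = c v3

lemma NoR_comp {c : Fin 2 × Fin (2 * k + 1) → Fin 3}
    (T : Fin 2 × Fin (2 * k + 1) → Fin 2 × Fin (2 * k + 1))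
    (hT : ∀ u v, D (T u) (T v) = D u v) (h : NoR c) : NoR (fun v => c (T v)) :=
  fun v1 v2 v3 hd => h (T v1) (T v2) (T v3) (by rw [hT, hT]; exact hd)

lemma rot_D (t : Fin (2 * k + 1)) (u v : Fin 2 × Fin (2 * k + 1)) :
    D (u.1, u.2 + t) (v.1, v.2 + t) = D u v := by
  simp only [D, cd, add_sub_add_right_eq_sub]

lemma refl_D (u v : Fin 2 × Fin (2 * k + 1)) :
    D (u.1, -u.2) (v.1, -v.2) = D u v := by
  simp only [D, cd]
  rw [show -v.2 - -u.2 = u.2 - v.2 by abel, show -u.2 - -v.2 = v.2 - u.2 by abel,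
    Nat.min_comm]

lemma swap_D (u v : Fin 2 × Fin (2 * k + 1)) :
    D (u.1 + 1, u.2) (v.1 + 1, v.2) = D u v := by
  simp only [D]
  congr 1
  simp [add_left_inj]

lemma fin3_no_fourth : ∀ α β γ v : Fin 3,
    α ≠ β → α ≠ γ → β ≠ γ → v ≠ α → v ≠ β → v ≠ γ → False := by decide

lemma fin3_third {α β γ v : Fin 3} (hab : α ≠ β) (hag : α ≠ γ) (hbg : β ≠ γ)
    (h1 : v ≠ α) (h2 : v ≠ β) : v = γ := by
  by_contra h3
  exact fin3_no_fourth α β γ v hab hag hbg h1 h2 h3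

lemma D_v (i j : Fin 2) {p q : ℕ} (hp : p < 2 * k + 1) (hq : q < 2 * k + 1) :
    D (i, (⟨p, hp⟩ : Fin (2 * k + 1))) (j, ⟨q, hq⟩) =
      (if i = j then 0 else 1) +
      (if p ≤ q then min (q - p) (2 * k + 1 - (q - p))
        else min (p - q) (2 * k + 1 - (p - q))) := by
  simp only [D]
  rw [cd_eval]

lemma D_same (i : Fin 2) {p q : ℕ} (hp : p < 2 * k + 1) (hq : q < 2 * k + 1) :
    D (i, (⟨p, hp⟩ : Fin (2 * k + 1))) (i, ⟨q, hq⟩) =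
      (if p ≤ q then min (q - p) (2 * k + 1 - (q - p))
        else min (p - q) (2 * k + 1 - (p - q))) := by
  rw [D_v]; simp

lemma D_diff {i j : Fin 2} (hij : i ≠ j) {p q : ℕ} (hp : p < 2 * k + 1)
    (hq : q < 2 * k + 1) :
    D (i, (⟨p, hp⟩ : Fin (2 * k + 1))) (j, ⟨q, hq⟩) =
      1 + (if p ≤ q then min (q - p) (2 * k + 1 - (q - p))
        else min (p - q) (2 * k + 1 - (p - q))) := by
  rw [D_v]; simp [hij]

lemma mk_add_mk {p q : ℕ} (hp : p < 2 * k + 1) (hq : q < 2 * k + 1)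
    (hpq : p + q < 2 * k + 1) :
    (⟨p, hp⟩ + ⟨q, hq⟩ : Fin (2 * k + 1)) = ⟨p + q, hpq⟩ := by
  rw [Fin.add_def]
  simp only [Fin.mk.injEq]
  exact Nat.mod_eq_of_lt hpq


/-- Core lemma: a non-pure column (colors α, β) with the third color γ in row 0
at cyclic distance `x ∈ [1,k]` is impossible. -/
lemma NP (hk : 1 ≤ k) : ∀ (x : ℕ), 1 ≤ x → x ≤ k →
    ∀ (c : Fin 2 × Fin (2 * k + 1) → Fin 3), NoR c →
    ∀ (α β γ : Fin 3), α ≠ β → α ≠ γ → β ≠ γ →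
    c (0, ⟨0, by omega⟩) = α → c (1, ⟨0, by omega⟩) = β →
    ∀ (hxlt : x < 2 * k + 1), c (0, ⟨x, hxlt⟩) = γ → False := by
  intro x
  induction x using Nat.strong_induction_on with
  | _ x ih =>
  intro hx1 hx2 c hc α β γ hab hag hbg hA0 hB0 hxlt hX
  have h0 : (0:ℕ) < 2 * k + 1 := by omega
  have h1' : (1:ℕ) < 2 * k + 1 := by omega
  have hnx : 2 * k + 1 - x < 2 * k + 1 := by omega
  have hA : c (0, ⟨0, h0⟩) = α := hA0
  have hB : c (1, ⟨0, h0⟩) = β := hB0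
  have hne01 : (0 : Fin 2) ≠ 1 := by decide
  have hne10 : (1 : Fin 2) ≠ 0 := by decide
  -- Step 1 : the mirrored vertex X' = (0, -x) also has color γ
  have s1a : c (0, ⟨2 * k + 1 - x, hnx⟩) ≠ β := by
    intro hW
    rcases hc (0, ⟨x, hxlt⟩) (0, ⟨0, h0⟩) (0, ⟨2 * k + 1 - x, hnx⟩)
      (by rw [D_same, D_same]; split_ifs <;> omega) with h | h | h
    · rw [hX, hA] at h; exact hag h.symm
    · rw [hA, hW] at h; exact hab h
    · rw [hX, hW] at h; exact hbg h.symm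
  have s1b : c (0, ⟨2 * k + 1 - x, hnx⟩) ≠ α := by
    intro hW
    rcases hc (0, ⟨x, hxlt⟩) (1, ⟨0, h0⟩) (0, ⟨2 * k + 1 - x, hnx⟩)
      (by rw [D_diff hne01, D_diff hne10]; split_ifs <;> omega) with h | h | h
    · rw [hX, hB] at h; exact hbg h.symm
    · rw [hB, hW] at h; exact hab h.symm
    · rw [hX, hW] at h; exact hag h.symm
  have hX' : c (0, ⟨2 * k + 1 - x, hnx⟩) = γ := fin3_third hab hag hbg s1b s1a
  -- case x = 1
  by_cases hx1' : x = 1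
  · subst hx1'
    rcases hc (0, ⟨1, hxlt⟩) (0, ⟨0, h0⟩) (1, ⟨0, h0⟩)
      (by rw [D_same, D_diff hne01]; split_ifs <;> omega) with h | h | h
    · rw [hX, hA] at h; exact hag h.symm
    · rw [hA, hB] at h; exact hab h
    · rw [hX, hB] at h; exact hbg h.symm
  -- facts about column 1 (used in both remaining cases)
  have n3a : c (1, ⟨1, h1'⟩) ≠ γ := by
    intro hI
    rcases hc (1, ⟨1, h1'⟩) (1, ⟨0, h0⟩) (0, ⟨0, h0⟩)
      (by rw [D_same, D_diff hne10]; split_ifs <;> omega) with h | h | h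
    · rw [hI, hB] at h; exact hbg h.symm
    · rw [hB, hA] at h; exact hab h.symm
    · rw [hI, hA] at h; exact hag h.symm
  have n3b : c (1, ⟨1, h1'⟩) ≠ β := by
    intro hI
    rcases hc (1, ⟨1, h1'⟩) (0, ⟨x, hxlt⟩) (0, ⟨0, h0⟩)
      (by rw [D_diff hne10, D_same]; split_ifs <;> omega) with h | h | h
    · rw [hI, hX] at h; exact hbg h
    · rw [hX, hA] at h; exact hag h.symm
    · rw [hI, hA] at h; exact hab h.symm
  -- case x = k
  by_cases hxk : x = k
  · have n3c : c (1, ⟨1, h1'⟩) ≠ α := by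
      intro hI
      rcases hc (1, ⟨1, h1'⟩) (0, ⟨2 * k + 1 - x, hnx⟩) (1, ⟨0, h0⟩)
        (by rw [D_diff hne10, D_diff hne01]; split_ifs <;> omega) with h | h | h
      · rw [hI, hX'] at h; exact hag h
      · rw [hX', hB] at h; exact hbg h.symm
      · rw [hI, hB] at h; exact hab h
    exact fin3_no_fourth α β γ (c (1, ⟨1, h1'⟩)) hab hag hbg n3c n3b n3a
  -- case 2 ≤ x ≤ k - 1
  have s41 : c (0, ⟨1, h1'⟩) ≠ γ := by
    intro hO
    rcases hc (0, ⟨1, h1'⟩) (0, ⟨0, h0⟩) (1, ⟨0, h0⟩)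
      (by rw [D_same, D_diff hne01]; split_ifs <;> omega) with h | h | h
    · rw [hO, hA] at h; exact hag h.symm
    · rw [hA, hB] at h; exact hab h
    · rw [hO, hB] at h; exact hbg h.symm
  have s44 : c (0, ⟨1, h1'⟩) ≠ α := by
    intro hO
    rcases hc (0, ⟨1, h1'⟩) (0, ⟨2 * k + 1 - x, hnx⟩) (1, ⟨0, h0⟩)
      (by rw [D_same, D_diff hne01]; split_ifs <;> omega) with h | h | h
    · rw [hO, hX'] at h; exact hag h
    · rw [hX', hB] at h; exact hbg h.symm
    · rw [hO, hB] at h; exact hab h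
  have hcO : c (0, ⟨1, h1'⟩) = β :=
    fin3_third hag hab (Ne.symm hbg) s44 s41
  have hcI : c (1, ⟨1, h1'⟩) = α :=
    fin3_third hbg (Ne.symm hab) (Ne.symm hag) n3b n3a
  -- recurse at column 1
  have hc' : NoR (fun v => c (v.1, v.2 + ⟨1, h1'⟩)) :=
    NoR_comp _ (fun u v => rot_D ⟨1, h1'⟩ u v) hc
  refine ih (x - 1) (by omega) (by omega) (by omega) _ hc' β α γ
    (Ne.symm hab) hbg hag ?_ ?_ (by omega) ?_
  · show c (0, (⟨0, by omega⟩ : Fin (2 * k + 1)) + ⟨1, h1'⟩) = β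
    rw [mk_add_mk _ _ (by omega)]
    exact hcO
  · show c (1, (⟨0, by omega⟩ : Fin (2 * k + 1)) + ⟨1, h1'⟩) = α
    rw [mk_add_mk _ _ (by omega)]
    exact hcI
  · show c (0, (⟨x - 1, by omega⟩ : Fin (2 * k + 1)) + ⟨1, h1'⟩) = γ
    rw [mk_add_mk _ _ (by omega)]
    have he : (⟨x - 1 + 1, by omega⟩ : Fin (2 * k + 1)) = ⟨x, hxlt⟩ := by
      simp only [Fin.mk.injEq]; omega
    rw [he]
    exact hX


lemma exists_third : ∀ α β : Fin 3, ∃ γ : Fin 3, γ ≠ α ∧ γ ≠ β := by decide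

lemma zero_mk_add (h0 : (0:ℕ) < 2 * k + 1) (j : Fin (2 * k + 1)) :
    (⟨0, h0⟩ : Fin (2 * k + 1)) + j = j := by
  apply Fin.ext
  simp [Fin.add_def, Nat.mod_eq_of_lt j.isLt]

lemma neg_val (z : Fin (2 * k + 1)) (hz : z.val ≠ 0) :
    (-z).val = 2 * k + 1 - z.val := by
  have hzlt := z.isLt
  rw [show -z = 0 - z from (zero_sub z).symm, sub_val]
  simp only [Fin.val_zero]
  rw [Nat.add_zero, Nat.mod_eq_of_lt (by omega)]

lemma neg_mk_zero (h0 : (0:ℕ) < 2 * k + 1) :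
    -(⟨0, h0⟩ : Fin (2 * k + 1)) = ⟨0, h0⟩ := by
  apply Fin.ext
  rw [show -(⟨0, h0⟩ : Fin (2 * k + 1)) = 0 - ⟨0, h0⟩ from (zero_sub _).symm, sub_val]
  simp

/-- Full version of NP : a non-pure column plus γ in row 0 anywhere is impossible. -/
lemma NPfull (hk : 1 ≤ k) (c : Fin 2 × Fin (2 * k + 1) → Fin 3) (hc : NoR c)
    (α β γ : Fin 3) (hab : α ≠ β) (hag : α ≠ γ) (hbg : β ≠ γ)
    (hA : c (0, ⟨0, by omega⟩) = α) (hB : c (1, ⟨0, by omega⟩) = β)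
    (z : Fin (2 * k + 1)) (hz : c (0, z) = γ) : False := by
  have h0 : (0:ℕ) < 2 * k + 1 := by omega
  have hzlt := z.isLt
  by_cases hz0 : z.val = 0
  · have hze : z = ⟨0, h0⟩ := Fin.ext hz0
    rw [hze] at hz
    rw [hz] at hA
    exact hag hA.symm
  by_cases hzk : z.val ≤ k
  · exact NP hk z.val (by omega) hzk c hc α β γ hab hag hbg hA hB z.isLt hz
  · have hc3 : NoR (fun v => c (v.1, -v.2)) :=
      NoR_comp _ (fun u v => refl_D u v) hc
    have hA3 : (fun v => c (v.1, -v.2)) ((0:Fin 2), (⟨0, h0⟩ : Fin (2 * k + 1))) = α := by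
      show c (0, -(⟨0, h0⟩ : Fin (2 * k + 1))) = α
      rw [neg_mk_zero]; exact hA
    have hB3 : (fun v => c (v.1, -v.2)) ((1:Fin 2), (⟨0, h0⟩ : Fin (2 * k + 1))) = β := by
      show c (1, -(⟨0, h0⟩ : Fin (2 * k + 1))) = β
      rw [neg_mk_zero]; exact hB
    have hz3 : (fun v => c (v.1, -v.2)) ((0:Fin 2), -z) = γ := by
      show c (0, - -z) = γ
      rw [neg_neg]; exact hz
    have hnv : (-z).val = 2 * k + 1 - z.val := neg_val z hz0
    exact NP hk ((-z).val) (by omega) (by omega) _ hc3 α β γ hab hag hbg hA3 hB3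
      (-z).isLt hz3

/-- every column is pure -/
lemma pure_all (hk : 1 ≤ k) (c : Fin 2 × Fin (2 * k + 1) → Fin 3) (hc : NoR c)
    (hs : Function.Surjective c) : ∀ j : Fin (2 * k + 1), c (0, j) = c (1, j) := by
  intro j
  by_contra hne
  have h0 : (0:ℕ) < 2 * k + 1 := by omega
  obtain ⟨γ, hg0, hg1⟩ := exists_third (c (0, j)) (c (1, j))
  obtain ⟨⟨i, y⟩, hw⟩ := hs γ
  -- rotate so column j is at 0
  have hc1 : NoR (fun v => c (v.1, v.2 + j)) :=
    NoR_comp _ (fun u v => rot_D j u v) hc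
  have e0 : (fun v => c (v.1, v.2 + j)) ((0:Fin 2), (⟨0, h0⟩ : Fin (2 * k + 1)))
      = c (0, j) := by
    show c (0, (⟨0, h0⟩ : Fin (2 * k + 1)) + j) = c (0, j)
    rw [zero_mk_add]
  have e1 : (fun v => c (v.1, v.2 + j)) ((1:Fin 2), (⟨0, h0⟩ : Fin (2 * k + 1)))
      = c (1, j) := by
    show c (1, (⟨0, h0⟩ : Fin (2 * k + 1)) + j) = c (1, j)
    rw [zero_mk_add]
  fin_cases i
  · refine NPfull hk _ hc1 (c (0, j)) (c (1, j)) γ hne (Ne.symm hg0) (Ne.symm hg1)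
      e0 e1 (y - j) ?_
    show c (0, y - j + j) = γ
    rw [show y - j + j = y from by abel]
    exact hw
  · -- swap rows
    have hc2 : NoR (fun v => c (v.1 + 1, v.2 + j)) :=
      NoR_comp (fun v => (v.1 + 1, v.2)) (fun u v => swap_D u v) hc1
    have f0 : (fun v => c (v.1 + 1, v.2 + j)) ((0:Fin 2), (⟨0, h0⟩ : Fin (2 * k + 1)))
        = c (1, j) := by
      show c ((0:Fin 2) + 1, (⟨0, h0⟩ : Fin (2 * k + 1)) + j) = c (1, j)
      rw [zero_mk_add]
      rfl
    have f1 : (fun v => c (v.1 + 1, v.2 + j)) ((1:Fin 2), (⟨0, h0⟩ : Fin (2 * k + 1)))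
        = c (0, j) := by
      show c ((1:Fin 2) + 1, (⟨0, h0⟩ : Fin (2 * k + 1)) + j) = c (0, j)
      rw [zero_mk_add]
      rfl
    refine NPfull hk _ hc2 (c (1, j)) (c (0, j)) γ (Ne.symm hne) (Ne.symm hg1)
      (Ne.symm hg0) f0 f1 (y - j) ?_
    show c ((0:Fin 2) + 1, y - j + j) = γ
    rw [show y - j + j = y from by abel]
    exact hw


lemma mk_val {p : ℕ} (hp : p < 2 * k + 1) : ((⟨p, hp⟩ : Fin (2 * k + 1))).val = p := rfl

/-- normalized adjacent-pair lemma (pure coloring): colors other than those of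
columns 0 and 1 can only sit in column k+1. -/
lemma ADJ0 (hk : 1 ≤ k) (c : Fin 2 × Fin (2 * k + 1) → Fin 3) (hc : NoR c)
    (hpure : ∀ j : Fin (2 * k + 1), c (0, j) = c (1, j))
    (h01 : c (0, ⟨0, by omega⟩) ≠ c (0, ⟨1, by omega⟩)) :
    ∀ y : Fin (2 * k + 1), y.val = k + 1 ∨ c (0, y) = c (0, ⟨0, by omega⟩) ∨
      c (0, y) = c (0, ⟨1, by omega⟩) := by
  have h0 : (0:ℕ) < 2 * k + 1 := by omega
  have h1' : (1:ℕ) < 2 * k + 1 := by omega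
  have hne01 : (0 : Fin 2) ≠ 1 := by decide
  intro y
  obtain ⟨s, hslt⟩ := y
  by_cases hs1 : s = k + 1
  · left; exact hs1
  right
  by_cases hs0 : s = 0
  · subst hs0; left; rfl
  by_cases hsk : s ≤ k
  · rcases hc (0, ⟨0, h0⟩) (0, ⟨s, hslt⟩) (1, ⟨1, h1'⟩)
      (by rw [D_same, D_diff hne01]; split_ifs <;> omega) with h | h | h
    · left; exact h.symm
    · right; rw [h]; exact (hpure ⟨1, h1'⟩).symm
    · exact absurd (h.trans (hpure ⟨1, h1'⟩).symm) h01
  · rcases hc (0, ⟨1, h1'⟩) (0, ⟨s, hslt⟩) (1, ⟨0, h0⟩)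
      (by rw [D_same, D_diff hne01]; split_ifs <;> omega) with h | h | h
    · right; exact h.symm
    · left; rw [h]; exact (hpure ⟨0, h0⟩).symm
    · exact absurd ((h.trans (hpure ⟨0, h0⟩).symm).symm) h01

/-- adjacent-pair lemma at general position. -/
lemma ADJ (hk : 1 ≤ k) (c : Fin 2 × Fin (2 * k + 1) → Fin 3) (hc : NoR c)
    (hpure : ∀ j : Fin (2 * k + 1), c (0, j) = c (1, j)) (a : Fin (2 * k + 1))
    (h : c (0, a) ≠ c (0, a + ⟨1, by omega⟩)) :
    ∀ y : Fin (2 * k + 1), (y - a).val = k + 1 ∨ c (0, y) = c (0, a) ∨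
      c (0, y) = c (0, a + ⟨1, by omega⟩) := by
  have h0 : (0:ℕ) < 2 * k + 1 := by omega
  have h1' : (1:ℕ) < 2 * k + 1 := by omega
  have hc1 : NoR (fun v => c (v.1, v.2 + a)) := NoR_comp _ (fun u v => rot_D a u v) hc
  have hpure1 : ∀ j : Fin (2 * k + 1),
      (fun v => c (v.1, v.2 + a)) ((0:Fin 2), j) = (fun v => c (v.1, v.2 + a)) ((1:Fin 2), j) :=
    fun j => hpure (j + a)
  have h01 : (fun v => c (v.1, v.2 + a)) ((0:Fin 2), (⟨0, h0⟩ : Fin (2 * k + 1)))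
      ≠ (fun v => c (v.1, v.2 + a)) ((0:Fin 2), (⟨1, h1'⟩ : Fin (2 * k + 1))) := by
    show c (0, (⟨0, h0⟩ : Fin (2 * k + 1)) + a) ≠ c (0, (⟨1, h1'⟩ : Fin (2 * k + 1)) + a)
    rw [zero_mk_add, add_comm (⟨1, h1'⟩ : Fin (2 * k + 1)) a]
    exact h
  intro y
  rcases ADJ0 hk _ hc1 hpure1 h01 (y - a) with h' | h' | h'
  · left; exact h'
  · right; left
    have h'' : c (0, y - a + a) = c (0, (⟨0, h0⟩ : Fin (2 * k + 1)) + a) := h'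
    rwa [show y - a + a = y from by abel, zero_mk_add] at h''
  · right; right
    have h'' : c (0, y - a + a) = c (0, (⟨1, h1'⟩ : Fin (2 * k + 1)) + a) := h'
    rwa [show y - a + a = y from by abel,
      add_comm (⟨1, h1'⟩ : Fin (2 * k + 1)) a] at h''

lemma fin2_three : ∀ a b c : Fin 2, a ≠ b → b ≠ c → a ≠ c → False := by decide

lemma cd_succ (hk : 1 ≤ k) (z : Fin (2 * k + 1)) (h1' : (1:ℕ) < 2 * k + 1) :
    cd z (z + ⟨1, h1'⟩) = 1 := by
  rw [cd, show z + (⟨1, h1'⟩ : Fin (2 * k + 1)) - z = ⟨1, h1'⟩ from by abel,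
    show z - (z + ⟨1, h1'⟩) = -⟨1, h1'⟩ from by abel,
    neg_val _ (by rw [mk_val]; omega), mk_val]
  omega

/-- Main combinatorial lemma: a surjective 3-coloring cannot be rainbow-free. -/
lemma no_nor (hk : 1 ≤ k) (c : Fin 2 × Fin (2 * k + 1) → Fin 3)
    (hs : Function.Surjective c) (hc : NoR c) : False := by
  have h0 : (0:ℕ) < 2 * k + 1 := by omega
  have h1' : (1:ℕ) < 2 * k + 1 := by omega
  have hpure := pure_all hk c hc hs
  -- there is an adjacent pair of columns with different row-0 colors
  have hnc : ∃ a : Fin (2 * k + 1), c (0, a) ≠ c (0, a + ⟨1, h1'⟩) := by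
    by_contra hcon
    push_neg at hcon
    have hall : ∀ (m : ℕ) (hm : m < 2 * k + 1),
        c (0, (⟨m, hm⟩ : Fin (2 * k + 1))) = c (0, ⟨0, h0⟩) := by
      intro m
      induction m with
      | zero => intro hm; rfl
      | succ m ihm =>
        intro hm
        have hstep := hcon ⟨m, by omega⟩
        rw [mk_add_mk _ _ (by omega)] at hstep
        rw [← hstep]
        exact ihm (by omega)
    have hconst : ∀ v, c v = c (0, ⟨0, h0⟩) := by
      intro v
      obtain ⟨i, y⟩ := v
      have hrow : c (i, y) = c (0, y) := by
        fin_cases i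
        · rfl
        · exact (hpure y).symm
      rw [hrow]
      exact hall y.val y.isLt
    obtain ⟨u, hu⟩ := hs 0
    obtain ⟨w, hw⟩ := hs 1
    rw [hconst u] at hu
    rw [hconst w] at hw
    exact absurd (hu.symm.trans hw) (by decide)
  obtain ⟨a, hadj⟩ := hnc
  obtain ⟨γ, hγa, hγb⟩ := exists_third (c (0, a)) (c (0, a + ⟨1, h1'⟩))
  obtain ⟨⟨i, y⟩, hwγ⟩ := hs γ
  have hfy : c (0, y) = γ := by
    fin_cases i
    · exact hwγ
    · rw [hpure y]; exact hwγ
  have huniq : ∀ w : Fin (2 * k + 1), c (0, w) = γ → (w - a).val = k + 1 := by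
    intro w hw
    rcases ADJ hk c hc hpure a hadj w with h | h | h
    · exact h
    · rw [hw] at h; exact absurd h hγa
    · rw [hw] at h; exact absurd h hγb
  have ht : (y - a).val = k + 1 := huniq y hfy
  have hyav : y - a = ⟨k + 1, by omega⟩ := Fin.ext ht
  -- neighbours of y do not have color γ
  have htm : c (0, y - ⟨1, h1'⟩) ≠ γ := by
    intro hcγ
    have h2 := huniq _ hcγ
    have heq : y - ⟨1, h1'⟩ - a = y - a := Fin.ext (by rw [h2, ht])
    have h3 : (⟨1, h1'⟩ : Fin (2 * k + 1)) = 0 := sub_eq_self.mp (sub_left_inj.mp heq)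
    have hv := congrArg Fin.val h3
    rw [mk_val, Fin.val_zero] at hv
    exact one_ne_zero hv
  have htp : c (0, y + ⟨1, h1'⟩) ≠ γ := by
    intro hcγ
    have h2 := huniq _ hcγ
    have heq : y + ⟨1, h1'⟩ - a = y - a := Fin.ext (by rw [h2, ht])
    have h4 : y + ⟨1, h1'⟩ = y := sub_left_inj.mp heq
    have h3 : (⟨1, h1'⟩ : Fin (2 * k + 1)) = 0 := add_eq_left.mp h4
    have hv := congrArg Fin.val h3
    rw [mk_val, Fin.val_zero] at hv
    exact one_ne_zero hv
  -- ADJ at y - 1 : the color of column a+1 equals that of column y-1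
  have hne1 : c (0, y - ⟨1, h1'⟩) ≠ c (0, (y - ⟨1, h1'⟩) + ⟨1, h1'⟩) := by
    rw [show y - (⟨1, h1'⟩ : Fin (2 * k + 1)) + ⟨1, h1'⟩ = y from by abel]
    intro h
    exact htm (h.trans hfy)
  have hB' : c (0, a + ⟨1, h1'⟩) = c (0, y - ⟨1, h1'⟩) := by
    rcases ADJ hk c hc hpure (y - ⟨1, h1'⟩) hne1 (a + ⟨1, h1'⟩) with h | h | h
    · exfalso
      rw [show a + (⟨1, h1'⟩ : Fin (2 * k + 1)) - (y - ⟨1, h1'⟩)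
          = ⟨1, h1'⟩ + ⟨1, h1'⟩ - (y - a) from by abel, hyav,
        show ((⟨1, h1'⟩ : Fin (2 * k + 1)) + ⟨1, h1'⟩) = ⟨2, by omega⟩
          from mk_add_mk _ _ (by omega), sub_val] at h
      simp only [mk_val] at h
      rw [modn _ (by omega)] at h
      split_ifs at h <;> omega
    · exact h
    · exfalso
      rw [show y - (⟨1, h1'⟩ : Fin (2 * k + 1)) + ⟨1, h1'⟩ = y from by abel] at h
      exact hγb (h.trans hfy).symm
  -- ADJ at y : the color of column a equals that of column y+1
  have hneY : c (0, y) ≠ c (0, y + ⟨1, h1'⟩) := by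
    intro h
    exact htp (h.symm.trans hfy)
  have hA' : c (0, a) = c (0, y + ⟨1, h1'⟩) := by
    rcases ADJ hk c hc hpure y hneY a with h | h | h
    · exfalso
      rw [show a - y = -(y - a) from by abel, hyav,
        neg_val _ (by rw [mk_val]; omega), mk_val] at h
      omega
    · exfalso; exact hγa (h.trans hfy).symm
    · exact h
  -- final rainbow triple (y-1, y, y+1)
  have hcd1 : cd (y - ⟨1, h1'⟩) y = 1 := by
    have hs1 := cd_succ hk (y - ⟨1, h1'⟩) h1'
    rwa [show y - (⟨1, h1'⟩ : Fin (2 * k + 1)) + ⟨1, h1'⟩ = y from by abel] at hs1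
  have hD : D ((0:Fin 2), y - ⟨1, h1'⟩) ((0:Fin 2), y) = D ((0:Fin 2), y) ((0:Fin 2), y + ⟨1, h1'⟩) := by
    simp only [D, if_pos rfl]
    rw [hcd1, cd_succ hk y h1']
  rcases hc _ _ _ hD with h | h | h
  · exact htm (h.trans hfy)
  · exact htp (h.symm.trans hfy)
  · exact hadj ((hB'.trans h).trans hA'.symm).symm

end AWaux


theorem stmt_7 (k : ℕ) (hk : 1 ≤ k) :
    aw (pathGraph 2 □ cycleGraph (2 * k + 1)) = 3 := by
  have h3 : 3 ∈ {r : ℕ | 0 < r ∧ ∀ c : Fin 2 × Fin (2 * k + 1) → Fin r,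
      Function.Surjective c → HasRainbow3AP (pathGraph 2 □ cycleGraph (2 * k + 1)) c} := by
    refine ⟨by norm_num, ?_⟩
    intro c hsurj
    by_contra hno
    apply AWaux.no_nor hk c hsurj
    intro v1 v2 v3 hd
    by_contra hcc
    push_neg at hcc
    exact hno ⟨v1, v2, v3,
      by rw [AWaux.dist_formula hk, AWaux.dist_formula hk]; exact hd,
      hcc.1, hcc.2.1, hcc.2.2⟩
  have hge : ∀ r ∈ {r : ℕ | 0 < r ∧ ∀ c : Fin 2 × Fin (2 * k + 1) → Fin r,
      Function.Surjective c → HasRainbow3AP (pathGraph 2 □ cycleGraph (2 * k + 1)) c},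
      3 ≤ r := by
    rintro r ⟨hr0, hr⟩
    by_contra hlt
    push_neg at hlt
    interval_cases r
    · obtain ⟨v1, v2, v3, _, h12, _, _⟩ := hr (fun _ => 0)
        (fun y => ⟨((0 : Fin 2), (0 : Fin (2 * k + 1))), Subsingleton.elim _ _⟩)
      exact h12 rfl
    · have hsurj : Function.Surjective (fun v : Fin 2 × Fin (2 * k + 1) =>
          if v = ((0 : Fin 2), (0 : Fin (2 * k + 1))) then (0 : Fin 2) else 1) := by
        intro y
        fin_cases y
        · exact ⟨((0 : Fin 2), (0 : Fin (2 * k + 1))), by simp⟩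
        · refine ⟨((1 : Fin 2), (0 : Fin (2 * k + 1))), ?_⟩
          show (if ((1 : Fin 2), (0 : Fin (2 * k + 1))) = ((0 : Fin 2), (0 : Fin (2 * k + 1)))
            then (0 : Fin 2) else 1) = _
          have hne : ((1 : Fin 2), (0 : Fin (2 * k + 1))) ≠ ((0 : Fin 2), (0 : Fin (2 * k + 1))) := by
            intro hcon
            have h2 : (1 : Fin 2) = 0 := congrArg Prod.fst hcon
            exact absurd h2 (by decide)
          rw [if_neg hne]
          rfl
      obtain ⟨v1, v2, v3, _, h12, h23, h13⟩ := hr _ hsurj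
      exact AWaux.fin2_three _ _ _ h12 h23 h13
  exact le_antisymm (Nat.sInf_le h3) (le_csInf ⟨3, h3⟩ hge)
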